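/- arXiv:2510.01555 — 4 statements merged into one kernel-verified Lean document; each statement's English description precedes it below -/
import Mathlib

section
/- Let Y be a finite type, E a real normed vector space, π : E → Y → ℝ a parameterized policy (π θ y > 0, ∑_y π θ y = 1, each θ ↦ π θ y differentiable), and π_ref : Y → ℝ a fixed reference distribution with π_ref y > 0 for all y. Fix θ₀ ∈ E and define the 'k₂ as loss' objective with on-policy sampling from the detached snapshot: J_{k₂}(θ) = ∑_y π θ₀ y * (1/2) * (log (π θ y / π_ref y))². Then the Fréchet derivative of J_{k₂} at θ = θ₀ equals ∑_y π θ₀ y • (log (π θ₀ y / π_ref y) • D(log π_(·) y)(θ₀)), which is exactly the Fréchet derivative at θ₀ of the reverse KL objective ∑_y π θ y * log (π θ y / π_ref y). (On-policy gradient equivalence of 'k₁ in reward' and 'k₂ as loss' with the true reverse-KL gradient; main theorem.) -/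
/-- On-policy gradient equivalence of `k₂ as loss` with the true reverse-KL gradient:
the Fréchet derivative at `θ₀` of the on-policy `k₂` objective equals the score-function
form with the `k₁` coefficient, which is exactly the Fréchet derivative at `θ₀` of the
reverse KL objective. -/
theorem k2_as_loss_gradient_equivalence
    {Y : Type*} [Fintype Y] {E : Type*} [NormedAddCommGroup E] [NormedSpace ℝ E]
    (π : E → Y → ℝ)
    (hpos : ∀ θ y, 0 < π θ y)
    (hsum : ∀ θ, ∑ y, π θ y = 1)
    (hdiff : ∀ y, Differentiable ℝ (fun θ => π θ y))
    (π_ref : Y → ℝ) (href : ∀ y, 0 < π_ref y)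
    (θ₀ : E) :
    fderiv ℝ (fun θ => ∑ y, π θ₀ y * ((1/2) * (Real.log (π θ y / π_ref y))^2)) θ₀
        = ∑ y, π θ₀ y •
            (Real.log (π θ₀ y / π_ref y) • fderiv ℝ (fun θ => Real.log (π θ y)) θ₀) ∧
    fderiv ℝ (fun θ => ∑ y, π θ₀ y * ((1/2) * (Real.log (π θ y / π_ref y))^2)) θ₀
        = fderiv ℝ (fun θ => ∑ y, π θ y * Real.log (π θ y / π_ref y)) θ₀ := by
  classical
  set L : Y → E →L[ℝ] ℝ := fun y => fderiv ℝ (fun θ => π θ y) θ₀ with hL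
  have hπd : ∀ y, HasFDerivAt (fun θ => π θ y) (L y) θ₀ :=
    fun y => (hdiff y θ₀).hasFDerivAt
  have hlog : ∀ y, HasFDerivAt (fun θ => Real.log (π θ y)) ((π θ₀ y)⁻¹ • L y) θ₀ :=
    fun y => (hπd y).log (hpos θ₀ y).ne'
  have hfl : ∀ y, fderiv ℝ (fun θ => Real.log (π θ y)) θ₀ = (π θ₀ y)⁻¹ • L y :=
    fun y => (hlog y).fderiv
  set g : Y → ℝ := fun y => Real.log (π θ₀ y / π_ref y) with hg
  have hlogdiv : ∀ y, HasFDerivAt (fun θ => Real.log (π θ y / π_ref y))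
      ((π θ₀ y)⁻¹ • L y) θ₀ := by
    intro y
    have h : (fun θ => Real.log (π θ y / π_ref y))
        = fun θ => Real.log (π θ y) - Real.log (π_ref y) := by
      funext θ; rw [Real.log_div (hpos θ y).ne' (href y).ne']
    rw [h]
    exact (hlog y).sub_const _
  have hA : HasFDerivAt (fun θ => ∑ y, π θ₀ y * ((1/2) * (Real.log (π θ y / π_ref y))^2))
      (∑ y, π θ₀ y • (g y • ((π θ₀ y)⁻¹ • L y))) θ₀ := by
    apply HasFDerivAt.fun_sum
    intro y _
    have hsq : HasFDerivAt (fun θ => Real.log (π θ y / π_ref y) ^ 2)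
        ((2 * g y) • ((π θ₀ y)⁻¹ • L y)) θ₀ := by
      have := (hlogdiv y).fun_mul (hlogdiv y)
      have heq : (fun θ => Real.log (π θ y / π_ref y) * Real.log (π θ y / π_ref y))
          = fun θ => Real.log (π θ y / π_ref y) ^ 2 := by
        funext θ; ring
      rw [heq] at this
      rw [two_mul, add_smul]
      exact this
    have h2 := (hsq.const_mul ((1:ℝ)/2)).const_mul (π θ₀ y)
    have hscal : π θ₀ y • ((1/2:ℝ) • ((2 * g y) • ((π θ₀ y)⁻¹ • L y)))
        = π θ₀ y • (g y • ((π θ₀ y)⁻¹ • L y)) := by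
      congr 1
      rw [smul_smul]
      congr 1
      ring
    rw [hscal] at h2
    exact h2
  have hB : HasFDerivAt (fun θ => ∑ y, π θ y * Real.log (π θ y / π_ref y))
      (∑ y, (π θ₀ y • ((π θ₀ y)⁻¹ • L y) + g y • L y)) θ₀ := by
    apply HasFDerivAt.fun_sum
    intro y _
    exact (hπd y).mul (hlogdiv y)
  have hsumL : ∑ y, L y = 0 := by
    have h1 : HasFDerivAt (fun θ => ∑ y, π θ y) (∑ y, L y) θ₀ :=
      HasFDerivAt.fun_sum fun y _ => hπd y
    have h2 : HasFDerivAt (fun _ : E => (1:ℝ)) (0 : E →L[ℝ] ℝ) θ₀ := hasFDerivAt_const 1 θ₀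
    have h3 : (fun θ => ∑ y, π θ y) = fun _ => (1:ℝ) := funext hsum
    rw [h3] at h1
    exact h1.unique h2
  have hM : ∀ y, π θ₀ y • (g y • ((π θ₀ y)⁻¹ • L y)) = g y • L y := by
    intro y
    rw [smul_smul, smul_smul]
    congr 1
    rw [mul_comm (π θ₀ y) (g y), mul_assoc, mul_inv_cancel₀ (hpos θ₀ y).ne', mul_one]
  constructor
  · rw [hA.fderiv]
    simp only [hfl, g]
  · rw [hA.fderiv, hB.fderiv]
    have h4 : ∀ y, π θ₀ y • ((π θ₀ y)⁻¹ • L y) + g y • L y = L y + g y • L y := by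
      intro y
      rw [smul_smul, mul_inv_cancel₀ (hpos θ₀ y).ne', one_smul]
    simp only [hM, h4]
    rw [Finset.sum_add_distrib, hsumL, zero_add]
end

section
/- Let Y be a finite type, E a real normed vector space, π : E → Y → ℝ a parameterized policy (π θ y > 0, ∑_y π θ y = 1, each θ ↦ π θ y differentiable), and π_ref : Y → ℝ a fixed reference distribution with π_ref y > 0 for all y. Fix θ₀ ∈ E and define the 'k₃ as loss' objective with on-policy sampling from the detached snapshot: J_{k₃}(θ) = ∑_y π θ₀ y * (π_ref y / π θ y − 1 − log (π_ref y / π θ y)). Then the Fréchet derivative of J_{k₃} at θ = θ₀ equals ∑_y π θ₀ y • ((1 − π_ref y / π θ₀ y) • D(log π_(·) y)(θ₀)); that is, 'k₃ as loss' is gradient-equivalent to an 'in reward' update with the detached coefficient k₃' = 1 − π_ref/π_θ. -/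
/-- `k₃ as loss` is gradient-equivalent (on-policy) to an `in reward` update with the
detached coefficient `k₃' = 1 − π_ref/π_θ`. -/
theorem k3_as_loss_gradient
    {Y : Type*} [Fintype Y] {E : Type*} [NormedAddCommGroup E] [NormedSpace ℝ E]
    (π : E → Y → ℝ)
    (hpos : ∀ θ y, 0 < π θ y)
    (hsum : ∀ θ, ∑ y, π θ y = 1)
    (hdiff : ∀ y, Differentiable ℝ (fun θ => π θ y))
    (π_ref : Y → ℝ) (href : ∀ y, 0 < π_ref y)
    (θ₀ : E) :
    fderiv ℝ
        (fun θ => ∑ y, π θ₀ y * (π_ref y / π θ y - 1 - Real.log (π_ref y / π θ y))) θ₀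
      = ∑ y, π θ₀ y •
          ((1 - π_ref y / π θ₀ y) • fderiv ℝ (fun θ => Real.log (π θ y)) θ₀) := by
  have key : ∀ y : Y, HasFDerivAt
      (fun θ => π θ₀ y * (π_ref y / π θ y - 1 - Real.log (π_ref y / π θ y)))
      (π θ₀ y • ((1 - π_ref y / π θ₀ y) • fderiv ℝ (fun θ => Real.log (π θ y)) θ₀)) θ₀ := by
    intro y
    have hne : π θ₀ y ≠ 0 := (hpos θ₀ y).ne'
    have hrefne : π_ref y ≠ 0 := (href y).ne'
    set D := fderiv ℝ (fun θ => π θ y) θ₀ with hDdef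
    have hD : HasFDerivAt (fun θ => π θ y) D θ₀ := (hdiff y θ₀).hasFDerivAt
    have hlog : HasFDerivAt (fun θ => Real.log (π θ y)) ((π θ₀ y)⁻¹ • D) θ₀ :=
      hD.log hne
    have hlogf : fderiv ℝ (fun θ => Real.log (π θ y)) θ₀ = (π θ₀ y)⁻¹ • D := hlog.fderiv
    -- rewrite the function using log_div
    have hfun : (fun θ => π θ₀ y * (π_ref y / π θ y - 1 - Real.log (π_ref y / π θ y)))
        = fun θ => π θ₀ y * (π_ref y * (π θ y)⁻¹ - 1
            - (Real.log (π_ref y) - Real.log (π θ y))) := by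
      funext θ
      rw [Real.log_div hrefne (hpos θ y).ne', div_eq_mul_inv]
    rw [hfun]
    have hinv : HasFDerivAt (fun θ => (π θ y)⁻¹) (-((π θ₀ y ^ 2)⁻¹) • D) θ₀ := by
      have h := (hasFDerivAt_inv hne).comp θ₀ hD
      refine h.congr_fderiv ?_
      ext v
      simp [mul_comm]
    have h1 : HasFDerivAt (fun θ => π_ref y * (π θ y)⁻¹ - 1
          - (Real.log (π_ref y) - Real.log (π θ y)))
        ((π_ref y • (-((π θ₀ y ^ 2)⁻¹) • D)) - (0 - (π θ₀ y)⁻¹ • D)) θ₀ := by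
      exact ((hinv.const_mul (π_ref y)).sub_const 1).sub
        ((hasFDerivAt_const (Real.log (π_ref y)) θ₀).sub hlog)
    have h2 := h1.const_mul (π θ₀ y)
    refine h2.congr_fderiv ?_
    symm
    rw [hlogf]
    ext v
    simp only [ContinuousLinearMap.smul_apply, ContinuousLinearMap.sub_apply,
      ContinuousLinearMap.zero_apply, smul_eq_mul, neg_smul, ContinuousLinearMap.neg_apply]
    field_simp
    ring
  have hsumd : HasFDerivAt
      (fun θ => ∑ y, π θ₀ y * (π_ref y / π θ y - 1 - Real.log (π_ref y / π θ y)))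
      (∑ y, π θ₀ y • ((1 - π_ref y / π θ₀ y) • fderiv ℝ (fun θ => Real.log (π θ y)) θ₀)) θ₀ := by
    exact HasFDerivAt.fun_sum fun y _ => key y
  exact hsumd.fderiv
end

section
/- Let p be the Gaussian density with mean μ_p and standard deviation σ_p > 0 and q the Gaussian density with mean μ_q and standard deviation σ_q > 0 on ℝ. Then the second moment of the importance ratio under q, namely the function x ↦ (p x)² / (q x) = (p x / q x)² * q x, is Lebesgue integrable on ℝ if and only if 2σ_q² > σ_p². (Finite variance of the k₃ estimator for Gaussians requires the sampling distribution to be sufficiently wide.) -/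
open MeasureTheory Real

/-- The Gaussian density with mean `μ` and standard deviation `σ`. -/
noncomputable def gaussianDensity (μ σ : ℝ) : ℝ → ℝ :=
  fun x => (1 / (σ * Real.sqrt (2 * Real.pi))) * Real.exp (-(x - μ)^2 / (2 * σ^2))

lemma integrable_exp_quadratic_iff (b c : ℝ) :
    Integrable (fun x : ℝ => Real.exp (-b * x^2 + c * x)) ↔ 0 < b := by
  constructor
  · intro h
    by_contra hb
    push_neg at hb
    have hge : ∀ x : ℝ, 0 ≤ c * x → 1 ≤ Real.exp (-b * x^2 + c * x) := by
      intro x hx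
      rw [Real.one_le_exp_iff]
      have : 0 ≤ -b * x^2 := mul_nonneg (by linarith) (sq_nonneg x)
      linarith
    have hfin := h.measure_ge_lt_top (ε := 1) one_pos
    have : (volume : Measure ℝ) {x | 1 ≤ Real.exp (-b * x^2 + c * x)} = ⊤ := by
      rcases le_or_gt 0 c with hc | hc
      · refine top_unique (le_trans ?_ (measure_mono (fun x (hx : x ∈ Set.Ici 0) =>
          hge x (mul_nonneg hc hx))))
        simp [Real.volume_Ici]
      · refine top_unique (le_trans ?_ (measure_mono (fun x (hx : x ∈ Set.Iic 0) =>
          hge x (by nlinarith [hx.out]))))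
        simp [Real.volume_Iic]
    rw [this] at hfin
    exact absurd hfin (lt_irrefl _)
  · intro hb
    have hb' : b ≠ 0 := ne_of_gt hb
    have h0 : Integrable (fun x : ℝ => Real.exp (-b * x^2)) := integrable_exp_neg_mul_sq hb
    have h1 := (h0.comp_sub_right (c / (2 * b))).const_mul (Real.exp (c^2 / (4 * b)))
    refine h1.congr (Filter.Eventually.of_forall fun x => ?_)
    show Real.exp _ * Real.exp _ = _
    rw [← Real.exp_add]
    congr 1
    field_simp
    ring

/-- For Gaussians `p = N(μ_p, σ_p²)` and `q = N(μ_q, σ_q²)`, the second moment of the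
importance ratio under `q`, i.e. `x ↦ (p x)² / q x`, is Lebesgue integrable on `ℝ`
if and only if `2σ_q² > σ_p²`. -/
theorem gaussian_k3_second_moment_finite_iff
    (μp μq σp σq : ℝ) (hσp : 0 < σp) (hσq : 0 < σq) :
    Integrable (fun x : ℝ => (gaussianDensity μp σp x)^2 / gaussianDensity μq σq x)
      ↔ 2 * σq^2 > σp^2 := by
  set b : ℝ := 1/σp^2 - 1/(2*σq^2) with hb
  set c : ℝ := 2*μp/σp^2 - μq/σq^2 with hc
  set d : ℝ := -(μp^2)/σp^2 + μq^2/(2*σq^2) with hd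
  have hσp' : σp ≠ 0 := ne_of_gt hσp
  have hσq' : σq ≠ 0 := ne_of_gt hσq
  have hπ : (0:ℝ) < Real.sqrt (2 * Real.pi) := Real.sqrt_pos.mpr (by positivity)
  set Ap : ℝ := 1 / (σp * Real.sqrt (2 * Real.pi)) with hAp
  set Aq : ℝ := 1 / (σq * Real.sqrt (2 * Real.pi)) with hAq
  have hApos : 0 < Ap := by positivity
  have hAqpos : 0 < Aq := by positivity
  set K : ℝ := Ap^2 / Aq * Real.exp d with hK
  have hKpos : 0 < K := by positivity
  have heq : ∀ x : ℝ, (gaussianDensity μp σp x)^2 / gaussianDensity μq σq x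
      = K * Real.exp (-b * x^2 + c * x) := by
    intro x
    unfold gaussianDensity
    rw [mul_pow, sq (Real.exp _), ← Real.exp_add, mul_div_mul_comm, ← Real.exp_sub, hK,
      mul_assoc, ← Real.exp_add]
    congr 2
    rw [hd, hb, hc]
    field_simp
    ring
  simp only [heq]
  rw [integrable_const_mul_iff (isUnit_iff_ne_zero.mpr (ne_of_gt hKpos)),
    integrable_exp_quadratic_iff, hb, sub_pos,
    div_lt_div_iff₀ (by positivity) (by positivity), one_mul, one_mul]
end

section
/- Let Y be a finite type, E a real normed vector space, π : E → Y → ℝ a parameterized policy (π θ y > 0, ∑_y π θ y = 1, each θ ↦ π θ y differentiable), π_ref : Y → ℝ strictly positive, and ψ : ℝ → ℝ differentiable. Fix θ₀ ∈ E and define the general 'as loss' objective with on-policy sampling: J_ψ(θ) = ∑_y π θ₀ y * ψ(log (π θ y) − log (π_ref y)). Then its Fréchet derivative at θ = θ₀ equals the 'in reward' form with detached coefficient ψ'(log π θ₀ y − log π_ref y): D J_ψ(θ₀) = ∑_y π θ₀ y • (ψ'(log (π θ₀ y) − log (π_ref y)) • D(log π_(·) y)(θ₀)). (Every 'k_n as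 loss' head equals a 'k_{n'} in reward' head under on-policy sampling, with k_{n'} the derivative of the penalty with respect to the log-probability.) -/
/-- Every `k_n as loss` head equals a `k_{n'} in reward` head under on-policy sampling:
for a differentiable penalty `ψ` of the log-ratio, the Fréchet derivative at `θ₀` of
the on-policy `as loss` objective equals the score-function form with detached
coefficient `ψ'(log π θ₀ − log π_ref)`. -/
theorem as_loss_equals_in_reward
    {Y : Type*} [Fintype Y] {E : Type*} [NormedAddCommGroup E] [NormedSpace ℝ E]
    (π : E → Y → ℝ)
    (hpos : ∀ θ y, 0 < π θ y)
    (hsum : ∀ θ, ∑ y, π θ y = 1)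
    (hdiff : ∀ y, Differentiable ℝ (fun θ => π θ y))
    (π_ref : Y → ℝ) (href : ∀ y, 0 < π_ref y)
    (ψ : ℝ → ℝ) (hψ : Differentiable ℝ ψ)
    (θ₀ : E) :
    fderiv ℝ (fun θ => ∑ y, π θ₀ y * ψ (Real.log (π θ y) - Real.log (π_ref y))) θ₀
      = ∑ y, π θ₀ y •
          (deriv ψ (Real.log (π θ₀ y) - Real.log (π_ref y)) •
            fderiv ℝ (fun θ => Real.log (π θ y)) θ₀) := by
  have hlog : ∀ y, DifferentiableAt ℝ (fun θ => Real.log (π θ y)) θ₀ := fun y =>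
    ((hdiff y).differentiableAt).log (hpos θ₀ y).ne'
  have hterm : ∀ y, DifferentiableAt ℝ
      (fun θ => ψ (Real.log (π θ y) - Real.log (π_ref y))) θ₀ := fun y =>
    (hψ _).comp θ₀ ((hlog y).sub_const _)
  rw [fderiv_fun_sum (fun y _ => ((hterm y).const_mul _))]
  refine Finset.sum_congr rfl fun y _ => ?_
  rw [fderiv_const_mul (hterm y)]
  congr 1
  have h1 : fderiv ℝ (fun θ => ψ (Real.log (π θ y) - Real.log (π_ref y))) θ₀
      = deriv ψ (Real.log (π θ₀ y) - Real.log (π_ref y)) •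
        fderiv ℝ (fun θ => Real.log (π θ y) - Real.log (π_ref y)) θ₀ := by
    rw [show (fun θ => ψ (Real.log (π θ y) - Real.log (π_ref y))) = ψ ∘ (fun θ => Real.log (π θ y) - Real.log (π_ref y)) from rfl, fderiv_comp θ₀ (hψ _) ((hlog y).sub_const _)]
    ext v
    simp only [ContinuousLinearMap.coe_comp', Function.comp_apply, ContinuousLinearMap.smul_apply, smul_eq_mul]; rw [← toSpanSingleton_deriv]; simp [mul_comm]
  rw [h1, fderiv_sub_const]
end
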